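/- Let K be a number field of degree n ≥ 2 with integral basis {ω₁,…,ω_n} of 𝔬_K, let 𝐍_{K/ℚ}(s) := N_{K/ℚ}(s₁ω₁+⋯+s_nω_n), and let D² denote the discriminant of K (so D = det(σ_i(ω_j)) over the n embeddings σ_i of K). If p is a prime, t ≥ 0 an integer, and s ∈ ℤⁿ is such that p^t divides ∂𝐍_{K/ℚ}(s)/∂s_j for every j = 1,…,n, then p^{⌈tn/(n−1)⌉} divides D²·𝐍_{K/ℚ}(s). -/

import Mathlib

open NumberField
open MvPolynomial Finset

/-- A multivariate polynomial over `ℂ` vanishing at all integer points is zero. -/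
theorem mv_zero_of_int_points : ∀ {m : ℕ} (P : MvPolynomial (Fin m) ℂ),
    (∀ s : Fin m → ℤ, MvPolynomial.eval (fun i => (s i : ℂ)) P = 0) → P = 0 := by
  intro m
  induction m with
  | zero =>
    intro P h
    obtain ⟨r, rfl⟩ := MvPolynomial.C_surjective (Fin 0) P
    have h0 := h (fun i => i.elim0)
    simpa using h0
  | succ m ih =>
    intro P h
    apply (MvPolynomial.finSuccEquiv ℂ m).injective
    rw [map_zero]
    set Q := MvPolynomial.finSuccEquiv ℂ m P with hQ
    refine Polynomial.ext fun k => ?_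
    rw [Polynomial.coeff_zero]
    apply ih
    intro s
    set φ : MvPolynomial (Fin m) ℂ →+* ℂ := (MvPolynomial.eval fun i => (s i : ℂ)) with hφ
    have key : Q.map φ = 0 := by
      apply Polynomial.eq_zero_of_infinite_isRoot
      apply Set.Infinite.mono (s := Set.range ((↑·) : ℤ → ℂ))
      · rintro x ⟨a, rfl⟩
        have h1 : Polynomial.eval ((a : ℂ)) (Q.map φ) = φ (Polynomial.eval (MvPolynomial.C (a:ℂ)) Q) := by
          rw [Polynomial.eval_map]
          have := Polynomial.eval₂_hom φ (p := Q) (MvPolynomial.C (a:ℂ))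
          rw [hφ] at this ⊢
          simpa using this
        have h2 : φ (Polynomial.eval (MvPolynomial.C (a:ℂ)) Q) =
            MvPolynomial.eval (Fin.cases ((a:ℂ)) (fun i => (s i : ℂ))) P := by
          rw [hφ, hQ]
          rw [MvPolynomial.eval_polynomial_eval_finSuccEquiv]
          simp
        have h3 : MvPolynomial.eval (Fin.cases ((a:ℂ)) (fun i => (s i : ℂ))) P = 0 := by
          have := h (Fin.cases a s)
          rw [show (fun i => ((Fin.cases a s i : ℤ) : ℂ))
              = Fin.cases ((a:ℂ)) (fun i => (s i : ℂ)) from funext fun i => by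
            induction i using Fin.cases <;> simp] at this
          exact this
        simp only [Set.mem_setOf_eq, Polynomial.IsRoot.def]
        rw [h1, h2, h3]
      · exact Set.infinite_range_of_injective Int.cast_injective
    have := congrArg (fun q => Polynomial.coeff q k) key
    simpa [Polynomial.coeff_map] using this

theorem pderiv_finset_prod {σ R ι : Type*} [CommRing R] [DecidableEq ι] (j : σ)
    (S : Finset ι) (f : ι → MvPolynomial σ R) :
    MvPolynomial.pderiv j (∏ i ∈ S, f i)
      = ∑ i ∈ S, MvPolynomial.pderiv j (f i) * ∏ k ∈ S.erase i, f k := by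
  induction S using Finset.induction_on with
  | empty => simp
  | insert a T hnotmem ih =>
    rw [Finset.prod_insert hnotmem, MvPolynomial.pderiv_mul, ih, Finset.sum_insert hnotmem]
    rw [Finset.erase_insert hnotmem]
    rw [Finset.mul_sum]
    congr 1
    apply Finset.sum_congr rfl
    intro i hi
    rw [Finset.erase_insert_of_ne (by rintro rfl; exact hnotmem hi)]
    rw [Finset.prod_insert (fun hmem => hnotmem (Finset.mem_of_mem_erase hmem))]
    ring

theorem det_mem_subring {n : ℕ} (S : Subring ℂ) (A : Matrix (Fin n) (Fin n) ℂ)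
    (h : ∀ i j, A i j ∈ S) : A.det ∈ S := by
  rw [Matrix.det_apply]
  exact Subring.sum_mem _ fun σ _ =>
    zsmul_mem (Subring.prod_mem _ fun i _ => h _ _) _

theorem adjugate_mem_subring {n : ℕ} (S : Subring ℂ) (A : Matrix (Fin n) (Fin n) ℂ)
    (h : ∀ i j, A i j ∈ S) (i j : Fin n) : A.adjugate i j ∈ S := by
  rw [Matrix.adjugate_apply]
  apply det_mem_subring
  intro i' j'
  rw [Matrix.updateRow_apply]
  split
  · rw [Pi.single_apply]
    split
    · exact Subring.one_mem S
    · exact Subring.zero_mem S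
  · exact h _ _


/-- The divisibility estimate of §9 of Browning–Heath-Brown: if `p^t` divides all partial
derivatives of the norm form `𝐍_{K/ℚ}` at `s ∈ ℤⁿ`, then `p^{⌈tn/(n−1)⌉}` divides
`D²·𝐍_{K/ℚ}(s)`, where `D²` is the discriminant of `K`. -/
theorem prime_power_divides_discriminant_times_norm
    (K : Type) [Field K] [NumberField K]
    (n : ℕ) (hn2 : 2 ≤ n) (hn : Module.finrank ℚ K = n)
    (b : Module.Basis (Fin n) ℤ (𝓞 K))
    (Nf : MvPolynomial (Fin n) ℤ)
    (hNf : ∀ s : Fin n → ℤ,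
      MvPolynomial.eval s Nf = Algebra.norm ℤ (∑ i, s i • b i))
    (p : ℕ) (hp : p.Prime) (t : ℕ) (s : Fin n → ℤ)
    (hdiv : ∀ j, (p : ℤ) ^ t ∣ MvPolynomial.eval s (MvPolynomial.pderiv j Nf)) :
    (p : ℤ) ^ (⌈(t * n : ℚ) / ((n : ℚ) - 1)⌉₊)
      ∣ NumberField.discr K * MvPolynomial.eval s Nf := by
  classical
  let bQ : Module.Basis (Fin n) ℚ K := b.localizationLocalization ℚ (nonZeroDivisors ℤ) K
  have card_eq : Fintype.card (Fin n) = Fintype.card (K →ₐ[ℚ] ℂ) := by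
    rw [AlgHom.card, Fintype.card_fin, hn]
  let e : Fin n ≃ (K →ₐ[ℚ] ℂ) := Fintype.equivOfCardEq card_eq
  let M : Matrix (Fin n) (Fin n) ℂ := Matrix.of fun i j => e j (bQ i)
  -- cast-eval lemma
  have cast_eval : ∀ (P : MvPolynomial (Fin n) ℤ) (σ : Fin n → ℤ),
      ((MvPolynomial.eval σ P : ℤ) : ℂ)
        = MvPolynomial.eval (fun i => ((σ i : ℤ) : ℂ))
            (MvPolynomial.map (Int.castRingHom ℂ) P) := by
    intro P σ
    rw [MvPolynomial.eval_map]
    have h := MvPolynomial.eval₂_comp_left (Int.castRingHom ℂ) (RingHom.id ℤ) σ P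
    simpa [MvPolynomial.eval₂_id, Function.comp_def] using h
  -- norm as product over embeddings
  have norm_prod : ∀ σf : Fin n → ℤ,
      ((MvPolynomial.eval σf Nf : ℤ) : ℂ)
        = ∏ j : Fin n, (∑ i : Fin n, (σf i : ℂ) * M i j) := by
    intro σf
    rw [hNf]
    set x : 𝓞 K := ∑ i, σf i • b i with hx
    have h1 : ((Algebra.norm ℤ x : ℤ) : ℚ) = Algebra.norm ℚ (algebraMap (𝓞 K) K x) :=
      Algebra.coe_norm_int x
    have h2 : ((Algebra.norm ℤ x : ℤ) : ℂ) = ((((Algebra.norm ℤ x : ℤ) : ℚ)) : ℂ) := by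
      push_cast; ring
    rw [h2, h1]
    have h3 : (((Algebra.norm ℚ (algebraMap (𝓞 K) K x)) : ℚ) : ℂ)
        = algebraMap ℚ ℂ (Algebra.norm ℚ (algebraMap (𝓞 K) K x)) := by
      rw [eq_ratCast (algebraMap ℚ ℂ)]
    rw [h3, Algebra.norm_eq_prod_embeddings ℚ ℂ]
    rw [← Equiv.prod_comp e (fun σ => σ (algebraMap (𝓞 K) K x))]
    apply Finset.prod_congr rfl
    intro j _
    have h4 : algebraMap (𝓞 K) K x = ∑ i, σf i • bQ i := by
      rw [hx, map_sum]
      apply Finset.sum_congr rfl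
      intro i _
      rw [map_zsmul, Module.Basis.localizationLocalization_apply]
    rw [h4, map_sum]
    apply Finset.sum_congr rfl
    intro i _
    rw [map_zsmul]
    rw [zsmul_eq_mul]
    rfl
  -- the linear forms as polynomials over ℂ
  set Lpoly : Fin n → MvPolynomial (Fin n) ℂ :=
    fun j => ∑ i : Fin n, MvPolynomial.C (M i j) * MvPolynomial.X i with hLpoly
  have poly_id : MvPolynomial.map (Int.castRingHom ℂ) Nf = ∏ j : Fin n, Lpoly j := by
    rw [← sub_eq_zero]
    apply mv_zero_of_int_points
    intro σf
    rw [map_sub, sub_eq_zero, ← cast_eval, norm_prod]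
    rw [map_prod]
    apply Finset.prod_congr rfl
    intro j _
    simp [hLpoly, mul_comm]
  -- values of the linear forms at s
  set Lval : Fin n → ℂ := fun j => ∑ i : Fin n, (s i : ℂ) * M i j with hLval
  have evalL : ∀ j, MvPolynomial.eval (fun i => ((s i : ℤ) : ℂ)) (Lpoly j) = Lval j := by
    intro j
    simp [hLpoly, hLval, mul_comm]
  -- derivative of the linear form
  have pderivL : ∀ i j, MvPolynomial.pderiv i (Lpoly j) = MvPolynomial.C (M i j) := by
    intro i j
    rw [hLpoly]
    rw [map_sum]
    rw [Finset.sum_eq_single i]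
    · rw [MvPolynomial.pderiv_C_mul, MvPolynomial.pderiv_X_self, mul_one]
    · intro k _ hk
      rw [MvPolynomial.pderiv_C_mul, MvPolynomial.pderiv_X_of_ne hk, mul_zero]
    · intro h; exact absurd (Finset.mem_univ i) h
  -- value of the partial derivatives
  set P : Fin n → ℂ := fun j => ∏ k ∈ Finset.univ.erase j, Lval k with hP
  have deriv_val : ∀ i, ((MvPolynomial.eval s (MvPolynomial.pderiv i Nf) : ℤ) : ℂ)
      = ∑ j : Fin n, M i j * P j := by
    intro i
    rw [cast_eval, ← MvPolynomial.pderiv_map, poly_id]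
    rw [pderiv_finset_prod]
    rw [map_sum]
    apply Finset.sum_congr rfl
    intro j _
    rw [pderivL, map_mul, MvPolynomial.eval_C, map_prod]
    congr 1
    apply Finset.prod_congr rfl
    intro k _
    exact evalL k
  -- the linear-algebra identity det M * P i = ∑ adj i j * v j
  set v : Fin n → ℂ := fun i => ((MvPolynomial.eval s (MvPolynomial.pderiv i Nf) : ℤ) : ℂ)
    with hv
  have hMv : M.mulVec P = v := by
    funext i
    show M.mulVec P i = ((MvPolynomial.eval s (MvPolynomial.pderiv i Nf) : ℤ) : ℂ)
    rw [deriv_val i]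
    simp [Matrix.mulVec, dotProduct]
  have key : ∀ i, M.det * P i = ∑ j : Fin n, M.adjugate i j * v j := by
    intro i
    have h5 : M.adjugate.mulVec v = M.det • P := by
      rw [← hMv, Matrix.mulVec_mulVec, Matrix.adjugate_mul, Matrix.smul_mulVec,
        Matrix.one_mulVec]
    have h6 := congrFun h5 i
    simp only [Pi.smul_apply, smul_eq_mul] at h6
    rw [← h6]
    simp [Matrix.mulVec, dotProduct]
  -- integrality
  set SR : Subring ℂ := (integralClosure ℤ ℂ).toSubring with hSR
  have hmemSR : ∀ z : ℂ, z ∈ SR ↔ IsIntegral ℤ z := fun z => Iff.rfl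
  have hMmem : ∀ i j, M i j ∈ SR := by
    intro i j
    rw [hmemSR]
    have h7 : (bQ i) = algebraMap (𝓞 K) K (b i) := Module.Basis.localizationLocalization_apply _ _ _ _ _
    have h8 : IsIntegral ℤ (algebraMap (𝓞 K) K (b i)) := RingOfIntegers.isIntegral_coe (b i)
    have h9 : M i j = ((e j : K →+* ℂ).toIntAlgHom) (algebraMap (𝓞 K) K (b i)) := by
      show (e j) (bQ i) = _
      rw [h7]; rfl
    rw [h9]
    exact IsIntegral.map _ h8
  have hLmem : ∀ j, Lval j ∈ SR := by
    intro j
    rw [hLval]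
    exact Subring.sum_mem _ fun i _ => Subring.mul_mem _ (intCast_mem SR _) (hMmem i j)
  have hPmem : ∀ j, P j ∈ SR := by
    intro j
    exact Subring.prod_mem _ fun k _ => hLmem k
  -- divide partial derivatives by p^t
  have hvdiv : ∀ j, ∃ m : ℤ, v j = (p : ℂ) ^ t * (m : ℂ) := by
    intro j
    obtain ⟨m, hm⟩ := hdiv j
    refine ⟨m, ?_⟩
    show ((MvPolynomial.eval s (MvPolynomial.pderiv j Nf) : ℤ) : ℂ) = _
    rw [hm]; push_cast; ring
  choose mm hmm using hvdiv
  set w : Fin n → ℂ := fun i => ∑ j : Fin n, M.adjugate i j * (mm j : ℂ) with hw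
  have hwmem : ∀ i, w i ∈ SR := by
    intro i
    exact Subring.sum_mem _ fun j _ => Subring.mul_mem _
      (adjugate_mem_subring SR M hMmem i j) (intCast_mem SR _)
  have key2 : ∀ i, M.det * P i = (p : ℂ) ^ t * w i := by
    intro i
    rw [key i, hw, Finset.mul_sum]
    apply Finset.sum_congr rfl
    intro j _
    rw [hmm j]; ring
  -- product over i
  have prodP : ∏ j : Fin n, P j = (∏ k : Fin n, Lval k) ^ (n - 1) := by
    rw [hP]
    rw [Finset.prod_comm' (s := Finset.univ) (t := fun j => Finset.univ.erase j)
      (s' := fun k => Finset.univ.erase k) (t' := Finset.univ)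
      (by intro x y; simp [Finset.mem_erase]; exact ne_comm)]
    rw [← Finset.prod_pow]
    apply Finset.prod_congr rfl
    intro k _
    rw [Finset.prod_const, Finset.card_erase_of_mem (Finset.mem_univ k), Finset.card_univ,
      Fintype.card_fin]
  have hNc : (∏ k : Fin n, Lval k) = ((MvPolynomial.eval s Nf : ℤ) : ℂ) := by
    rw [norm_prod s]
  have main1 : M.det ^ n * ((MvPolynomial.eval s Nf : ℤ) : ℂ) ^ (n - 1)
      = (p : ℂ) ^ (t * n) * ∏ i : Fin n, w i := by
    have h10 : ∏ i : Fin n, (M.det * P i) = ∏ i : Fin n, ((p : ℂ) ^ t * w i) :=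
      Finset.prod_congr rfl fun i _ => key2 i
    rw [Finset.prod_mul_distrib, Finset.prod_const, Finset.card_univ, Fintype.card_fin,
      prodP, hNc, Finset.prod_mul_distrib, Finset.prod_const, Finset.card_univ,
      Fintype.card_fin, ← pow_mul] at h10
    exact h10
  -- discriminant
  have hdisc : M.det ^ 2 = ((NumberField.discr K : ℤ) : ℂ) := by
    have h11 := Algebra.discr_eq_det_embeddingsMatrixReindex_pow_two ℚ ℂ (⇑bQ) e
    have h12 : Algebra.embeddingsMatrixReindex ℚ ℂ (⇑bQ) e = M := by
      ext i j
      rfl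
    rw [h12] at h11
    have h13 : Algebra.discr ℚ ⇑bQ = ((NumberField.discr K : ℤ) : ℚ) := by
      have h14 := Algebra.discr_localizationLocalization (Rₘ := ℚ) ℤ (nonZeroDivisors ℤ) K b
      rw [show (⇑bQ : Fin n → K) = ⇑(b.localizationLocalization ℚ (nonZeroDivisors ℤ) K)
        from rfl]
      rw [h14, NumberField.discr_eq_discr K b]
      simp
    rw [h13] at h11
    rw [← h11, eq_ratCast (algebraMap ℚ ℂ)]
    norm_cast
  -- square the main identity
  have main2 : ((NumberField.discr K ^ n * (MvPolynomial.eval s Nf) ^ (2 * (n - 1)) : ℤ) : ℂ)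
      = (p : ℂ) ^ (2 * (t * n)) * ((∏ i : Fin n, w i) ^ 2) := by
    have h15 := congrArg (fun z => z ^ 2) main1
    simp only [mul_pow, ← pow_mul] at h15
    push_cast
    calc ((NumberField.discr K : ℤ) : ℂ) ^ n * ((MvPolynomial.eval s Nf : ℤ) : ℂ) ^ (2 * (n - 1))
        = (M.det ^ 2) ^ n * ((MvPolynomial.eval s Nf : ℤ) : ℂ) ^ ((n - 1) * 2) := by
          rw [hdisc]; ring_nf
      _ = (M.det ^ n) ^ 2 * (((MvPolynomial.eval s Nf : ℤ) : ℂ) ^ (n - 1)) ^ 2 := by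
          rw [← pow_mul, ← pow_mul, ← pow_mul]; ring_nf
      _ = (p : ℂ) ^ (t * n * 2) * ((∏ i : Fin n, w i) ^ 2) := by rw [← mul_pow, main1]; ring
      _ = (p : ℂ) ^ (2 * (t * n)) * ((∏ i : Fin n, w i) ^ 2) := by rw [mul_comm (t * n) 2]
  -- descent to ℤ
  set X : ℤ := NumberField.discr K ^ n * (MvPolynomial.eval s Nf) ^ (2 * (n - 1)) with hX
  have hzmem : (∏ i : Fin n, w i) ^ 2 ∈ SR :=
    Subring.pow_mem _ (Subring.prod_mem _ fun i _ => hwmem i) 2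
  have hzint : IsIntegral ℤ ((∏ i : Fin n, w i) ^ 2) := (hmemSR _).mp hzmem
  have hpne : ((p : ℂ)) ^ (2 * (t * n)) ≠ 0 := by
    apply pow_ne_zero
    exact_mod_cast hp.ne_zero
  have hpneQ : ((p : ℚ)) ^ (2 * (t * n)) ≠ 0 := by
    apply pow_ne_zero
    exact_mod_cast hp.ne_zero
  set q : ℚ := (X : ℚ) / (p : ℚ) ^ (2 * (t * n)) with hq
  have hqc : algebraMap ℚ ℂ q = (∏ i : Fin n, w i) ^ 2 := by
    rw [eq_ratCast (algebraMap ℚ ℂ), hq]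
    push_cast
    rw [div_eq_iff hpne]
    rw [main2]; ring
  have hqint : IsIntegral ℤ q := by
    apply IsIntegral.tower_bot (A := ℚ) (B := ℂ) (algebraMap ℚ ℂ).injective
    rw [hqc]
    exact hzint
  obtain ⟨m, hm⟩ := IsIntegrallyClosed.isIntegral_iff.mp hqint
  rw [eq_intCast (algebraMap ℤ ℚ)] at hm
  have hXm : X = (p : ℤ) ^ (2 * (t * n)) * m := by
    have h16 : (X : ℚ) = (p : ℚ) ^ (2 * (t * n)) * (m : ℚ) := by
      rw [hq] at hm
      field_simp at hm
      rw [← hm]; ring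
    exact_mod_cast h16
  have hdvdX : (p : ℤ) ^ (2 * (t * n)) ∣ X := ⟨m, hXm⟩
  -- final arithmetic
  by_cases hN0 : MvPolynomial.eval s Nf = 0
  · rw [hN0, mul_zero]; exact dvd_zero _
  set d : ℕ := (NumberField.discr K).natAbs with hd
  set c0 : ℕ := (MvPolynomial.eval s Nf).natAbs with hc0def
  have hd0 : d ≠ 0 := Int.natAbs_ne_zero.mpr (NumberField.discr_ne_zero K)
  have hc00 : c0 ≠ 0 := Int.natAbs_ne_zero.mpr hN0
  have hdvdnat : p ^ (2 * (t * n)) ∣ d ^ n * c0 ^ (2 * (n - 1)) := by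
    have h17 := Int.natAbs_dvd_natAbs.mpr hdvdX
    rw [hX] at h17
    simpa [Int.natAbs_mul, Int.natAbs_pow] using h17
  set a : ℕ := d.factorization p with ha
  set c : ℕ := c0.factorization p with hc
  have hfac : 2 * (t * n) ≤ n * a + (2 * (n - 1)) * c := by
    have hne : d ^ n * c0 ^ (2 * (n - 1)) ≠ 0 :=
      mul_ne_zero (pow_ne_zero _ hd0) (pow_ne_zero _ hc00)
    have h18 := (Nat.Prime.pow_dvd_iff_le_factorization hp hne).mp hdvdnat
    rwa [Nat.factorization_mul (pow_ne_zero _ hd0) (pow_ne_zero _ hc00),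
      Nat.factorization_pow, Nat.factorization_pow, Finsupp.add_apply, Finsupp.smul_apply,
      Finsupp.smul_apply, smul_eq_mul, smul_eq_mul] at h18
  have hmain : t * n ≤ (n - 1) * (a + c) := by
    have h19 : n * a ≤ (2 * (n - 1)) * a := Nat.mul_le_mul_right a (by omega)
    have h20 : 2 * (t * n) ≤ 2 * ((n - 1) * (a + c)) := by
      calc 2 * (t * n) ≤ n * a + (2 * (n - 1)) * c := hfac
        _ ≤ (2 * (n - 1)) * a + (2 * (n - 1)) * c := Nat.add_le_add_right h19 _
        _ = 2 * ((n - 1) * (a + c)) := by ring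
    exact Nat.le_of_mul_le_mul_left h20 (by norm_num)
  have hceil : ⌈(t * n : ℚ) / ((n : ℚ) - 1)⌉₊ ≤ a + c := by
    rw [Nat.ceil_le]
    rw [div_le_iff₀ (by
      have : (2 : ℚ) ≤ (n : ℚ) := by exact_mod_cast hn2
      linarith)]
    have hcast := (Nat.cast_le (α := ℚ)).mpr hmain
    push_cast [Nat.cast_sub (show 1 ≤ n by omega)] at hcast ⊢
    linarith
  have hfinal : (p : ℤ) ^ (a + c) ∣ NumberField.discr K * MvPolynomial.eval s Nf := by
    rw [← Int.dvd_natAbs]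
    have h21 : p ^ (a + c) ∣ d * c0 := by
      rw [pow_add]
      exact mul_dvd_mul (Nat.ordProj_dvd d p) (Nat.ordProj_dvd c0 p)
    rw [Int.natAbs_mul]
    exact_mod_cast Int.natCast_dvd_natCast.mpr h21
  exact dvd_trans (pow_dvd_pow _ hceil) hfinal
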